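/- Let p be a prime, d ≥ 1, 1 ≤ i ≤ d, and x_0, x_1, …, x_{d+1} ∈ F_p(x) with x_0,…,x_{d+1} ∉ F_p, x_i − 1 ∉ F_p, x_i − x_{i−1} ≠ 1, and x_i ≠ x_{i+1}. Then f̃(x_0,…,x_{i−1}, x_i−1, x_{i+1},…,x_{d+1}) − f̃(x_0,…,x_{d+1}) = (1/(x_i−x_{i−1}−1))·( f̃(x_0,…,x_{i−1}, x_{i+1},…,x_{d+1}) − f̃(x_0,…,x_{i−2}, x_i−1, x_{i+1},…,x_{d+1}) ) + (1/(x_i−x_{i+1}))·( f̃(x_0,…,x_i, x_{i+2},…,x_{d+1}) − f̃(x_0,…,x_{i−1}, x_{i+1},…,x_{d+1}) ). -/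

import Mathlib

open Finset

variable (p : ℕ) [Fact p.Prime]

/-- chains `m < n₁ < ⋯ < n_r < k` with factors `(nᵢ - xᵢ)⁻¹`. -/
noncomputable def h (k : ℕ) : List (RatFunc (ZMod p)) → ℕ → RatFunc (ZMod p)
  | [], m => if m < k then 1 else 0
  | x :: xs, m => ∑ n ∈ Finset.Ioo m k, (((n : ℕ) : RatFunc (ZMod p)) - x)⁻¹ * h k xs n

@[simp] lemma h_nil (k m : ℕ) : h p k [] m = if m < k then 1 else 0 := rfl

lemma h_cons (k m : ℕ) (x : RatFunc (ZMod p)) (xs : List (RatFunc (ZMod p))) :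
    h p k (x :: xs) m = ∑ n ∈ Finset.Ioo m k, (((n : ℕ) : RatFunc (ZMod p)) - x)⁻¹ * h p k xs n := rfl

lemma h_split (k : ℕ) (x : RatFunc (ZMod p)) (L : List (RatFunc (ZMod p))) :
    ∀ (as : List (RatFunc (ZMod p))) (a : ℕ),
    h p k (as ++ x :: L) a = ∑ m ∈ Finset.Ioo a k,
      h p m as a * (((m : ℕ) : RatFunc (ZMod p)) - x)⁻¹ * h p k L m := by
  intro as
  induction as with
  | nil =>
    intro a
    rw [List.nil_append, h_cons]
    refine Finset.sum_congr rfl fun n hn => ?_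
    simp only [Finset.mem_Ioo] at hn
    rw [h_nil, if_pos hn.1, one_mul]
  | cons a0 as' ih =>
    intro a
    rw [List.cons_append, h_cons]
    have : ∀ j ∈ Finset.Ioo a k, (((j:ℕ) : RatFunc (ZMod p)) - a0)⁻¹ * h p k (as' ++ x :: L) j
        = ∑ m ∈ Finset.Ioo j k, (((j:ℕ):RatFunc (ZMod p)) - a0)⁻¹ *
            (h p m as' j * (((m : ℕ) : RatFunc (ZMod p)) - x)⁻¹ * h p k L m) := by
      intro j _
      rw [ih j, Finset.mul_sum]
    rw [Finset.sum_congr rfl this]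
    rw [Finset.sum_comm' (t' := Finset.Ioo a k) (s' := fun m => Finset.Ioo a m)
      (by intro j m; simp only [Finset.mem_Ioo]; omega)]
    refine Finset.sum_congr rfl fun m _ => ?_
    rw [h_cons, Finset.sum_mul, Finset.sum_mul]
    refine Finset.sum_congr rfl fun j _ => ?_
    ring

lemma telescope (y : RatFunc (ZMod p)) (m j : ℕ) (hmj : m < j) :
    ∑ n ∈ Finset.Ioo m j, (((((n+1) : ℕ) : RatFunc (ZMod p)) - y)⁻¹ - (((n:ℕ) : RatFunc (ZMod p)) - y)⁻¹)
      = (((j : ℕ) : RatFunc (ZMod p)) - y)⁻¹ - ((((m+1) : ℕ) : RatFunc (ZMod p)) - y)⁻¹ := by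
  have h1 : Finset.Ioo m j = Finset.Ico (m+1) j := by
    ext n; simp only [Finset.mem_Ioo, Finset.mem_Ico]; omega
  rw [h1, Finset.sum_Ico_eq_sum_range]
  have h2 := Finset.sum_range_sub (fun i => ((((m+1+i) : ℕ) : RatFunc (ZMod p)) - y)⁻¹) (j - (m+1))
  have h3 : ∀ i, m + 1 + i + 1 = m + 1 + (i+1) := by omega
  calc ∑ i ∈ Finset.range (j - (m+1)), (((((m+1+i)+1 : ℕ) : RatFunc (ZMod p)) - y)⁻¹ - (((m+1+i:ℕ) : RatFunc (ZMod p)) - y)⁻¹)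
      = ((((m+1+(j-(m+1)):ℕ)) : RatFunc (ZMod p)) - y)⁻¹ - ((((m+1:ℕ)) : RatFunc (ZMod p)) - y)⁻¹ := by
        rw [← h2]; refine Finset.sum_congr rfl fun i _ => ?_; rw [h3]
    _ = (((j : ℕ) : RatFunc (ZMod p)) - y)⁻¹ - ((((m+1) : ℕ) : RatFunc (ZMod p)) - y)⁻¹ := by
        have hj : m+1+(j-(m+1)) = j := by omega
        rw [hj]

lemma sub_ne (x : RatFunc (ZMod p)) (hx : ∀ c : ZMod p, x ≠ RatFunc.C c) (n : ℕ) :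
    ((n : ℕ) : RatFunc (ZMod p)) - x ≠ 0 := by
  intro h
  apply hx ((n : ℕ) : ZMod p)
  have h2 : x = ((n : ℕ) : RatFunc (ZMod p)) := by linear_combination -h
  rw [h2, ← map_natCast (RatFunc.C (K := ZMod p)) n]

lemma pf (a u v : RatFunc (ZMod p)) (huv : u - v ≠ 0) (hu : a - u ≠ 0) (hv : a - v ≠ 0) :
    (a - u)⁻¹ * (a - v)⁻¹ = (u - v)⁻¹ * ((a - u)⁻¹ - (a - v)⁻¹) := by
  field_simp
  ring

lemma core_nil (y : RatFunc (ZMod p)) (m : ℕ) (hm : m < p) :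
    h p p [y - 1] m - h p p [y] m
      = (((p : ℕ) : RatFunc (ZMod p)) - y)⁻¹ - ((((m+1) : ℕ) : RatFunc (ZMod p)) - y)⁻¹ := by
  rw [h_cons, h_cons, ← Finset.sum_sub_distrib, ← telescope p y m p hm]
  refine Finset.sum_congr rfl fun n hn => ?_
  simp only [Finset.mem_Ioo] at hn
  rw [h_nil, if_pos hn.2, mul_one, mul_one]
  have : ((n : ℕ) : RatFunc (ZMod p)) - (y - 1) = (((n+1) : ℕ) : RatFunc (ZMod p)) - y := by
    push_cast; ring
  rw [this]

lemma core_cons (y x : RatFunc (ZMod p)) (cs' : List (RatFunc (ZMod p))) (m : ℕ)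
    (hyx : y - x ≠ 0) (hx : ∀ n : ℕ, ((n : ℕ) : RatFunc (ZMod p)) - x ≠ 0)
    (hy : ∀ n : ℕ, ((n : ℕ) : RatFunc (ZMod p)) - y ≠ 0) :
    h p p ((y - 1) :: x :: cs') m - h p p (y :: x :: cs') m
      = (y - x)⁻¹ * (h p p (y :: cs') m - h p p (x :: cs') m)
        - ((((m+1) : ℕ) : RatFunc (ZMod p)) - y)⁻¹ * h p p (x :: cs') m := by
  rw [h_cons p p m (y-1), h_cons p p m y, ← Finset.sum_sub_distrib]
  have step1 : ∀ n ∈ Finset.Ioo m p,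
      (((n : ℕ) : RatFunc (ZMod p)) - (y-1))⁻¹ * h p p (x :: cs') n
        - (((n : ℕ) : RatFunc (ZMod p)) - y)⁻¹ * h p p (x :: cs') n
      = ∑ j ∈ Finset.Ioo n p,
          ((((n+1 : ℕ) : RatFunc (ZMod p)) - y)⁻¹ - (((n : ℕ) : RatFunc (ZMod p)) - y)⁻¹) *
            ((((j : ℕ) : RatFunc (ZMod p)) - x)⁻¹ * h p p cs' j) := by
    intro n _
    have hc : ((n : ℕ) : RatFunc (ZMod p)) - (y - 1) = (((n+1) : ℕ) : RatFunc (ZMod p)) - y := by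
      push_cast; ring
    rw [hc, ← sub_mul, h_cons, Finset.mul_sum]
  rw [Finset.sum_congr rfl step1]
  rw [Finset.sum_comm' (t' := Finset.Ioo m p) (s' := fun j => Finset.Ioo m j)
      (by intro n j; simp only [Finset.mem_Ioo]; omega)]
  have step2 : ∀ j ∈ Finset.Ioo m p,
      (∑ n ∈ Finset.Ioo m j,
        ((((n+1 : ℕ) : RatFunc (ZMod p)) - y)⁻¹ - (((n : ℕ) : RatFunc (ZMod p)) - y)⁻¹) *
          ((((j : ℕ) : RatFunc (ZMod p)) - x)⁻¹ * h p p cs' j))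
      = ((((j : ℕ) : RatFunc (ZMod p)) - y)⁻¹ - (((m+1 : ℕ) : RatFunc (ZMod p)) - y)⁻¹) *
          ((((j : ℕ) : RatFunc (ZMod p)) - x)⁻¹ * h p p cs' j) := by
    intro j hj
    simp only [Finset.mem_Ioo] at hj
    rw [← Finset.sum_mul, telescope p y m j hj.1]
  rw [Finset.sum_congr rfl step2]
  rw [h_cons p p m y, h_cons p p m x, ← Finset.sum_sub_distrib, Finset.mul_sum, Finset.mul_sum,
    ← Finset.sum_sub_distrib]
  refine Finset.sum_congr rfl fun j hj => ?_
  have hpf := pf p ((j : ℕ) : RatFunc (ZMod p)) y x hyx (hy j) (hx j)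
  linear_combination (h p p cs' j) * hpf

lemma cons_cond (p l m : ℕ) (n0 : Fin p) (r : Fin l → Fin p) :
    ((∀ i j : Fin (l+1), i < j → (Fin.cons n0 r : Fin (l+1) → Fin p) i < (Fin.cons n0 r : Fin (l+1) → Fin p) j)
        ∧ ∀ i, m < ((Fin.cons n0 r : Fin (l+1) → Fin p) i : ℕ))
    ↔ (m < (n0 : ℕ) ∧ ((∀ i j : Fin l, i < j → r i < r j) ∧ ∀ i, (n0 : ℕ) < (r i : ℕ))) := by
  constructor
  · rintro ⟨h1, h2⟩
    refine ⟨by simpa using h2 0, ⟨fun i j hij => ?_, fun i => ?_⟩⟩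
    · have := h1 i.succ j.succ (Fin.succ_lt_succ_iff.mpr hij)
      simpa using this
    · have := h1 0 i.succ i.succ_pos
      rw [Fin.cons_zero, Fin.cons_succ, Fin.lt_def] at this; exact this
  · rintro ⟨hm, h1, h2⟩
    constructor
    · intro i j hij
      induction i using Fin.cases with
      | zero =>
        induction j using Fin.cases with
        | zero => exact absurd hij (lt_irrefl _)
        | succ j' => simp only [Fin.cons_zero, Fin.cons_succ, Fin.lt_def]; exact h2 j'
      | succ i' =>
        induction j using Fin.cases with
        | zero => exact absurd hij (by simp [Fin.lt_def])
        | succ j' =>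
          simp only [Fin.cons_succ]
          exact h1 i' j' (Fin.succ_lt_succ_iff.mp hij)
    · intro i
      induction i using Fin.cases with
      | zero => simpa using hm
      | succ i' =>
        simp only [Fin.cons_succ]
        exact lt_trans hm (h2 i')

lemma h_eq (p : ℕ) [Fact p.Prime] (xs : List (RatFunc (ZMod p))) : ∀ (m : ℕ), m < p →
    h p p xs m = ∑ n ∈ Finset.univ.filter
      (fun n : Fin xs.length → Fin p =>
        (∀ i j : Fin xs.length, i < j → n i < n j) ∧ ∀ i, m < (n i : ℕ)),
      ∏ i, (((n i : ℕ) : RatFunc (ZMod p)) - xs.get i)⁻¹ := by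
  induction xs with
  | nil =>
    intro m hm
    rw [h_nil, if_pos hm]
    rw [Finset.filter_true_of_mem (fun g _ => ⟨fun i => i.elim0, fun i => i.elim0⟩)]
    simp
  | cons x t ih =>
    intro m hm
    rw [h_cons, Finset.sum_filter]
    have e1 : (∑ g : Fin (x::t).length → Fin p,
        if ((∀ i j, i < j → g i < g j) ∧ ∀ i, m < (g i : ℕ)) then
          ∏ i, (((g i : ℕ) : RatFunc (ZMod p)) - (x::t).get i)⁻¹ else 0)
      = ∑ q : Fin p × (Fin t.length → Fin p),
        (if ((∀ i j, i < j → (Fin.cons q.1 q.2 : Fin (t.length+1) → Fin p) i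
                  < (Fin.cons q.1 q.2 : Fin (t.length+1) → Fin p) j)
              ∧ ∀ i, m < ((Fin.cons q.1 q.2 : Fin (t.length+1) → Fin p) i : ℕ)) then
          ∏ i, ((((Fin.cons q.1 q.2 : Fin (t.length+1) → Fin p) i : ℕ) : RatFunc (ZMod p))
              - (x::t).get i)⁻¹ else 0) := by
      refine Fintype.sum_equiv (Fin.consEquiv (fun _ : Fin (t.length+1) => Fin p)).symm _ _ ?_
      intro g
      have hg : (Fin.cons (g 0) (Fin.tail g) : Fin (t.length+1) → Fin p) = g :=
        Fin.cons_self_tail g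
      simp only [Fin.consEquiv_symm_apply]
      rw [hg]
      rfl
    rw [e1, Fintype.sum_prod_type]
    have e2 : ∀ n0 : Fin p,
        (∑ r : Fin t.length → Fin p,
          if ((∀ i j, i < j → (Fin.cons n0 r : Fin (t.length+1) → Fin p) i
                    < (Fin.cons n0 r : Fin (t.length+1) → Fin p) j)
                ∧ ∀ i, m < ((Fin.cons n0 r : Fin (t.length+1) → Fin p) i : ℕ)) then
            ∏ i, ((((Fin.cons n0 r : Fin (t.length+1) → Fin p) i : ℕ) : RatFunc (ZMod p))
                - (x::t).get i)⁻¹ else 0)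
        = if m < (n0 : ℕ) then
            ((((n0:ℕ) : ℕ) : RatFunc (ZMod p)) - x)⁻¹ * h p p t (n0 : ℕ) else 0 := by
      intro n0
      have hprod : ∀ r : Fin t.length → Fin p,
          (∏ i, ((((Fin.cons n0 r : Fin (t.length+1) → Fin p) i : ℕ) : RatFunc (ZMod p))
              - (x::t).get i)⁻¹)
          = (((n0:ℕ) : RatFunc (ZMod p)) - x)⁻¹ *
              ∏ i, (((r i : ℕ) : RatFunc (ZMod p)) - t.get i)⁻¹ := by
        intro r
        rw [Fin.prod_univ_succ]
        congr 1
      by_cases hn : m < (n0 : ℕ)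
      · rw [if_pos hn, ih (n0:ℕ) n0.isLt, Finset.sum_filter, Finset.mul_sum]
        refine Fintype.sum_congr _ _ fun r => ?_
        rw [hprod]
        simp only [cons_cond, hn, true_and]
        split_ifs <;> simp
      · rw [if_neg hn]
        refine Finset.sum_eq_zero fun r _ => ?_
        refine if_neg ?_
        rw [cons_cond]
        tauto
    rw [Fintype.sum_congr _ _ e2]
    rw [Fin.sum_univ_eq_sum_range
      (fun n => if m < n then (((n:ℕ) : RatFunc (ZMod p)) - x)⁻¹ * h p p t n else 0) p]
    rw [← Finset.sum_filter]
    refine (Finset.sum_congr ?_ fun n _ => rfl).symm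
    ext n
    simp only [Finset.mem_Ioo, Finset.mem_filter, Finset.mem_range]
    omega

lemma pzero : ((p : ℕ) : RatFunc (ZMod p)) = 0 := by
  have h2 : ((p:ℕ) : RatFunc (ZMod p)) = algebraMap (ZMod p) _ ((p:ℕ) : ZMod p) := by
    rw [map_natCast]
  rw [h2, ZMod.natCast_self, map_zero]

lemma key1 (y : RatFunc (ZMod p)) (m : ℕ) (hm : m < p) :
    h p p [y - 1] m - h p p [y] m
      = ((0 : RatFunc (ZMod p)) - y)⁻¹ - (((m : ℕ) : RatFunc (ZMod p)) - (y - 1))⁻¹ := by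
  rw [core_nil p y m hm, pzero]
  congr 2
  push_cast
  ring

lemma key2 (y x : RatFunc (ZMod p)) (cs' : List (RatFunc (ZMod p))) (m : ℕ)
    (hyx : y - x ≠ 0) (hx : ∀ n : ℕ, ((n : ℕ) : RatFunc (ZMod p)) - x ≠ 0)
    (hy : ∀ n : ℕ, ((n : ℕ) : RatFunc (ZMod p)) - y ≠ 0) :
    h p p ((y - 1) :: x :: cs') m - h p p (y :: x :: cs') m
      = (y - x)⁻¹ * (h p p (y :: cs') m - h p p (x :: cs') m)
        - (((m : ℕ) : RatFunc (ZMod p)) - (y - 1))⁻¹ * h p p (x :: cs') m := by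
  rw [core_cons p y x cs' m hyx hx hy]
  congr 3
  push_cast
  ring

lemma hsplit_one (as' : List (RatFunc (ZMod p))) (w : RatFunc (ZMod p)) :
    h p p (as' ++ [w]) 0
      = ∑ m ∈ Finset.Ioo 0 p, h p m as' 0 * (((m : ℕ) : RatFunc (ZMod p)) - w)⁻¹ := by
  rw [show as' ++ [w] = as' ++ w :: [] from rfl, h_split]
  refine Finset.sum_congr rfl fun m hm => ?_
  simp only [Finset.mem_Ioo] at hm
  rw [h_nil, if_pos hm.2, mul_one]


/-- `f(x₁, …, x_d) = ∑_{0 < n₁ < ⋯ < n_d < p} 1/((n₁ - x₁) ⋯ (n_d - x_d))` in the rational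
function field `𝔽_p(x)`, for a list of arguments `xs = [x₁, …, x_d]`; `f [] = 1`. -/
noncomputable def f (p : ℕ) [Fact p.Prime] (xs : List (RatFunc (ZMod p))) :
    RatFunc (ZMod p) :=
  ∑ n ∈ Finset.univ.filter
      (fun n : Fin xs.length → Fin p =>
        (∀ i j : Fin xs.length, i < j → n i < n j) ∧ ∀ i, (n i : ℕ) ≠ 0),
    ∏ i, (((n i : ℕ) : RatFunc (ZMod p)) - xs.get i)⁻¹

/-- `f̃(x₀, x₁, …, x_d, x_{d+1}) = (x₀ x_{d+1})⁻¹ f(x₁, …, x_d)`, applied to the list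
`[x₀, x₁, …, x_d, x_{d+1}]`. -/
noncomputable def ft (p : ℕ) [Fact p.Prime] (xs : List (RatFunc (ZMod p))) :
    RatFunc (ZMod p) :=
  (xs.headD 0 * xs.getLastD 0)⁻¹ * f p (xs.drop 1).dropLast


lemma f_eq (xs : List (RatFunc (ZMod p))) : f p xs = h p p xs 0 := by
  rw [h_eq p xs 0 (Fact.out (p := p.Prime)).pos, f]
  refine Finset.sum_congr ?_ fun _ _ => rfl
  congr 1
  ext g
  simp [Nat.pos_iff_ne_zero]

lemma nz (x : RatFunc (ZMod p)) (hx : ∀ n : ℕ, ((n : ℕ) : RatFunc (ZMod p)) - x ≠ 0) :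
    x ≠ 0 := by
  have := hx 0
  simpa [neg_ne_zero] using this

lemma ft_eval (u v : RatFunc (ZMod p)) (M : List (RatFunc (ZMod p))) :
    ft p (u :: (M ++ [v]))
      = ((0 : RatFunc (ZMod p)) - u)⁻¹ * ((0 : RatFunc (ZMod p)) - v)⁻¹ * h p p M 0 := by
  rw [ft]
  have h1 : (u :: (M ++ [v])).headD 0 = u := rfl
  have h2 : (u :: (M ++ [v])).getLastD 0 = v := by
    rw [show u :: (M ++ [v]) = (u :: M) ++ [v] by simp, List.getLastD_concat]
  have h3 : ((u :: (M ++ [v])).drop 1).dropLast = M := by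
    simp
  rw [h1, h2, h3, f_eq, mul_inv, zero_sub, zero_sub, inv_neg, inv_neg, neg_mul_neg]

lemma ft_eval' (L : List (RatFunc (ZMod p))) (u v : RatFunc (ZMod p))
    (M : List (RatFunc (ZMod p))) (hL : L = u :: (M ++ [v])) :
    ft p L = ((0 : RatFunc (ZMod p)) - u)⁻¹ * ((0 : RatFunc (ZMod p)) - v)⁻¹ * h p p M 0 := by
  rw [hL]; exact ft_eval p u v M

/-- Difference equation for `f̃` (Lemma for one translated argument): writing the argument
tuple `(x₀, …, x_{d+1})` with `1 ≤ i ≤ d` as `x₀ :: as ++ [y] ++ bs` where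
`as = [x₁, …, x_{i-1}]`, `y = xᵢ` and `bs = [x_{i+1}, …, x_{d+1}]` (so `bs ≠ []`), and with
`x_{i-1} = (x₀ :: as).getLastD 0` and `x_{i+1} = bs.headD 0`, one has
`f̃(x₀,…,xᵢ-1,…,x_{d+1}) - f̃(x₀,…,x_{d+1})
 = (xᵢ-x_{i-1}-1)⁻¹ (f̃(x₀,…,x_{i-1},x_{i+1},…,x_{d+1}) - f̃(x₀,…,x_{i-2},xᵢ-1,x_{i+1},…,x_{d+1}))
 + (xᵢ-x_{i+1})⁻¹ (f̃(x₀,…,xᵢ,x_{i+2},…,x_{d+1}) - f̃(x₀,…,x_{i-1},x_{i+1},…,x_{d+1}))`. -/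
theorem ft_one_translation (p : ℕ) [Fact p.Prime]
    (x0 y : RatFunc (ZMod p)) (as bs : List (RatFunc (ZMod p))) (hbs : bs ≠ [])
    (hnc : ∀ z ∈ x0 :: as ++ [y] ++ bs, ∀ c : ZMod p, z ≠ RatFunc.C c)
    (hy1 : ∀ c : ZMod p, y - 1 ≠ RatFunc.C c)
    (hprev : y - (x0 :: as).getLastD 0 ≠ 1)
    (hnext : y ≠ bs.headD 0) :
    ft p (x0 :: as ++ [y - 1] ++ bs) - ft p (x0 :: as ++ [y] ++ bs)
      = (y - (x0 :: as).getLastD 0 - 1)⁻¹ *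
          (ft p (x0 :: as ++ bs) - ft p ((x0 :: as).dropLast ++ [y - 1] ++ bs))
        + (y - bs.headD 0)⁻¹ *
          (ft p (x0 :: as ++ [y] ++ bs.tail) - ft p (x0 :: as ++ bs)) := by
  obtain ⟨cs, v, rfl⟩ : ∃ cs v, bs = cs ++ [v] := by
    rcases List.eq_nil_or_concat bs with hb | ⟨L, b, hb⟩
    · exact absurd hb hbs
    · exact ⟨L, b, by rw [hb, List.concat_eq_append]⟩
  have hp0 : 0 < p := (Fact.out (p := p.Prime)).pos
  have hx0n : ∀ n : ℕ, ((n : ℕ) : RatFunc (ZMod p)) - x0 ≠ 0 :=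
    sub_ne p x0 (fun c => hnc x0 (by simp) c)
  have hyn : ∀ n : ℕ, ((n : ℕ) : RatFunc (ZMod p)) - y ≠ 0 :=
    sub_ne p y (fun c => hnc y (by simp) c)
  have hvn : ∀ n : ℕ, ((n : ℕ) : RatFunc (ZMod p)) - v ≠ 0 :=
    sub_ne p v (fun c => hnc v (by simp) c)
  have hy1n : ∀ n : ℕ, ((n : ℕ) : RatFunc (ZMod p)) - (y - 1) ≠ 0 := sub_ne p (y - 1) hy1
  have hnil : h p p ([] : List (RatFunc (ZMod p))) 0 = 1 := by rw [h_nil, if_pos hp0]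
  have h1 := hx0n 0; rw [Nat.cast_zero] at h1
  have h2 := hyn 0; rw [Nat.cast_zero] at h2
  have h3 := hvn 0; rw [Nat.cast_zero] at h3
  have h4 := hy1n 0; rw [Nat.cast_zero] at h4
  have hx0' : x0 ≠ 0 := fun hh => h1 (by rw [hh, sub_zero])
  have hy' : y ≠ 0 := fun hh => h2 (by rw [hh, sub_zero])
  have hv' : v ≠ 0 := fun hh => h3 (by rw [hh, sub_zero])
  have hy1' : y - 1 ≠ 0 := fun hh => h4 (by rw [hh, sub_zero])
  have h1y : (1 : RatFunc (ZMod p)) - y ≠ 0 := fun hh => hy1' (by linear_combination -hh)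
  rcases List.eq_nil_or_concat as with rfl | ⟨as', xl, has⟩
  · cases cs with
    | nil =>
      have hgl : (x0 :: ([] : List (RatFunc (ZMod p)))).getLastD 0 = x0 := by simp
      have hhd : (([] : List (RatFunc (ZMod p))) ++ [v]).headD 0 = v := by simp
      have htl : (([] : List (RatFunc (ZMod p))) ++ [v]).tail = [] := by simp
      rw [hgl] at hprev
      rw [hhd] at hnext
      rw [hgl, hhd, htl]
      have h5 : y - v ≠ 0 := sub_ne_zero_of_ne hnext
      have h6 : y - x0 - 1 ≠ 0 := fun hh => hprev (by linear_combination hh)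
      rw [ft_eval' p (x0 :: ([] : List (RatFunc (ZMod p))) ++ [y - 1] ++ ([] ++ [v]))
          x0 v [y - 1] (by simp),
        ft_eval' p (x0 :: ([] : List (RatFunc (ZMod p))) ++ [y] ++ ([] ++ [v]))
          x0 v [y] (by simp),
        ft_eval' p (x0 :: ([] : List (RatFunc (ZMod p))) ++ ([] ++ [v])) x0 v [] (by simp),
        ft_eval' p ((x0 :: ([] : List (RatFunc (ZMod p)))).dropLast ++ [y - 1] ++ ([] ++ [v]))
          (y - 1) v [] (by simp),
        ft_eval' p (x0 :: ([] : List (RatFunc (ZMod p))) ++ [y] ++ []) x0 y [] (by simp)]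
      have hk : h p p [y - 1] 0 = h p p [y] 0 + ((0 - y)⁻¹ - (0 - (y - 1))⁻¹) := by
        have hh := key1 p y 0 hp0
        rw [Nat.cast_zero] at hh
        linear_combination hh
      have hx0y1 : x0 - (y - 1) ≠ 0 := fun hh => h6 (by linear_combination -hh)
      have P1 := pf p 0 x0 (y - 1) hx0y1 h1 h4
      have P2 := pf p 0 y v h5 h2 h3
      have P3 : (x0 - (y - 1))⁻¹ = -(y - x0 - 1)⁻¹ := by
        rw [show x0 - (y - 1) = -(y - x0 - 1) by ring, inv_neg]
      rw [hnil, hk]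
      linear_combination (-(0 - v)⁻¹ : RatFunc (ZMod p)) * P1 + ((0 - x0)⁻¹ : RatFunc (ZMod p)) * P2
        + (-(0 - v)⁻¹ * ((0 - x0)⁻¹ - (0 - (y - 1))⁻¹) : RatFunc (ZMod p)) * P3
    | cons x cs' =>
      have hxn : ∀ n : ℕ, ((n : ℕ) : RatFunc (ZMod p)) - x ≠ 0 :=
        sub_ne p x (fun c => hnc x (by simp) c)
      have hgl : (x0 :: ([] : List (RatFunc (ZMod p)))).getLastD 0 = x0 := by simp
      have hhd : ((x :: cs') ++ [v]).headD 0 = x := by simp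
      have htl : ((x :: cs') ++ [v]).tail = cs' ++ [v] := by simp
      rw [hgl] at hprev
      rw [hhd] at hnext
      rw [hgl, hhd, htl]
      have h5 : y - x ≠ 0 := sub_ne_zero_of_ne hnext
      have h6 : y - x0 - 1 ≠ 0 := fun hh => hprev (by linear_combination hh)
      have hx0y1 : x0 - (y - 1) ≠ 0 := fun hh => h6 (by linear_combination -hh)
      have P1 := pf p 0 x0 (y - 1) hx0y1 h1 h4
      have P3 : (x0 - (y - 1))⁻¹ = -(y - x0 - 1)⁻¹ := by
        rw [show x0 - (y - 1) = -(y - x0 - 1) by ring, inv_neg]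
      rw [ft_eval' p (x0 :: ([] : List (RatFunc (ZMod p))) ++ [y - 1] ++ ((x :: cs') ++ [v]))
          x0 v ((y - 1) :: x :: cs') (by simp),
        ft_eval' p (x0 :: ([] : List (RatFunc (ZMod p))) ++ [y] ++ ((x :: cs') ++ [v]))
          x0 v (y :: x :: cs') (by simp),
        ft_eval' p (x0 :: ([] : List (RatFunc (ZMod p))) ++ ((x :: cs') ++ [v]))
          x0 v (x :: cs') (by simp),
        ft_eval' p ((x0 :: ([] : List (RatFunc (ZMod p)))).dropLast ++ [y - 1] ++ ((x :: cs') ++ [v]))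
          (y - 1) v (x :: cs') (by simp),
        ft_eval' p (x0 :: ([] : List (RatFunc (ZMod p))) ++ [y] ++ (cs' ++ [v]))
          x0 v (y :: cs') (by simp)]
      have hk := key2 p y x cs' 0 h5 hxn hyn
      rw [Nat.cast_zero] at hk
      rw [show h p p ((y - 1) :: x :: cs') 0
          = h p p (y :: x :: cs') 0
            + ((y - x)⁻¹ * (h p p (y :: cs') 0 - h p p (x :: cs') 0)
              - (0 - (y - 1))⁻¹ * h p p (x :: cs') 0) from by linear_combination hk]
      linear_combination (-(0 - v)⁻¹ * h p p (x :: cs') 0 : RatFunc (ZMod p)) * P1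
        + (-(0 - v)⁻¹ * h p p (x :: cs') 0 * ((0 - x0)⁻¹ - (0 - (y - 1))⁻¹) : RatFunc (ZMod p)) * P3
  · obtain rfl : as = as' ++ [xl] := by rw [has, List.concat_eq_append]
    cases cs with
    | nil =>
      have hxln : ∀ n : ℕ, ((n : ℕ) : RatFunc (ZMod p)) - xl ≠ 0 :=
        sub_ne p xl (fun c => hnc xl (by simp) c)
      have hgl : (x0 :: (as' ++ [xl])).getLastD 0 = xl := by
        rw [show x0 :: (as' ++ [xl]) = (x0 :: as') ++ [xl] by simp, List.getLastD_concat]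
      have hhd : (([] : List (RatFunc (ZMod p))) ++ [v]).headD 0 = v := by simp
      have htl : (([] : List (RatFunc (ZMod p))) ++ [v]).tail = [] := by simp
      rw [hgl] at hprev
      rw [hhd] at hnext
      rw [hgl, hhd, htl]
      have h5 : y - v ≠ 0 := sub_ne_zero_of_ne hnext
      have h6 : y - xl - 1 ≠ 0 := fun hh => hprev (by linear_combination hh)
      have h7 : xl - (y - 1) ≠ 0 := fun hh => h6 (by linear_combination -hh)
      have P2 := pf p 0 y v h5 h2 h3
      have P3 : (xl - (y - 1))⁻¹ = -(y - xl - 1)⁻¹ := by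
        rw [show xl - (y - 1) = -(y - xl - 1) by ring, inv_neg]
      rw [ft_eval' p (x0 :: (as' ++ [xl]) ++ [y - 1] ++ ([] ++ [v]))
          x0 v (as' ++ xl :: [y - 1]) (by simp),
        ft_eval' p (x0 :: (as' ++ [xl]) ++ [y] ++ ([] ++ [v]))
          x0 v (as' ++ xl :: [y]) (by simp),
        ft_eval' p (x0 :: (as' ++ [xl]) ++ ([] ++ [v])) x0 v (as' ++ [xl]) (by simp),
        ft_eval' p ((x0 :: (as' ++ [xl])).dropLast ++ [y - 1] ++ ([] ++ [v]))
          x0 v (as' ++ [y - 1]) (by rw [show x0 :: (as' ++ [xl]) = (x0 :: as') ++ [xl] by simp, List.dropLast_concat]; simp),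
        ft_eval' p (x0 :: (as' ++ [xl]) ++ [y] ++ []) x0 y (as' ++ [xl]) (by simp)]
      have key : h p p (as' ++ xl :: [y - 1]) 0 - h p p (as' ++ xl :: [y]) 0
          = (0 - y)⁻¹ * h p p (as' ++ [xl]) 0
            - (xl - (y - 1))⁻¹ * (h p p (as' ++ [xl]) 0 - h p p (as' ++ [y - 1]) 0) := by
        rw [h_split p p xl [y - 1] as' 0, h_split p p xl [y] as' 0, ← Finset.sum_sub_distrib]
        have step : ∀ m ∈ Finset.Ioo 0 p,
            h p m as' 0 * (((m : ℕ) : RatFunc (ZMod p)) - xl)⁻¹ * h p p [y - 1] m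
              - h p m as' 0 * (((m : ℕ) : RatFunc (ZMod p)) - xl)⁻¹ * h p p [y] m
            = (0 - y)⁻¹ * (h p m as' 0 * (((m : ℕ) : RatFunc (ZMod p)) - xl)⁻¹)
              - (xl - (y - 1))⁻¹ *
                (h p m as' 0 * (((m : ℕ) : RatFunc (ZMod p)) - xl)⁻¹
                  - h p m as' 0 * (((m : ℕ) : RatFunc (ZMod p)) - (y - 1))⁻¹) := by
          intro m hm
          simp only [Finset.mem_Ioo] at hm
          have hk := key1 p y m hm.2
          have hpf := pf p (((m : ℕ) : RatFunc (ZMod p))) xl (y - 1) h7 (hxln m) (hy1n m)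
          linear_combination (h p m as' 0 * (((m : ℕ) : RatFunc (ZMod p)) - xl)⁻¹) * hk
            - (h p m as' 0) * hpf
        rw [Finset.sum_congr rfl step, Finset.sum_sub_distrib, ← Finset.mul_sum,
          ← Finset.mul_sum, Finset.sum_sub_distrib, ← hsplit_one p as' xl,
          ← hsplit_one p as' (y - 1)]
      rw [show h p p (as' ++ xl :: [y - 1]) 0
          = h p p (as' ++ xl :: [y]) 0
            + ((0 - y)⁻¹ * h p p (as' ++ [xl]) 0
              - (xl - (y - 1))⁻¹ * (h p p (as' ++ [xl]) 0 - h p p (as' ++ [y - 1]) 0))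
          from by linear_combination key]
      linear_combination ((0 - x0)⁻¹ * h p p (as' ++ [xl]) 0 : RatFunc (ZMod p)) * P2
        + (-(0 - x0)⁻¹ * (0 - v)⁻¹ *
            (h p p (as' ++ [xl]) 0 - h p p (as' ++ [y - 1]) 0) : RatFunc (ZMod p)) * P3
    | cons x cs' =>
      have hxn : ∀ n : ℕ, ((n : ℕ) : RatFunc (ZMod p)) - x ≠ 0 :=
        sub_ne p x (fun c => hnc x (by simp) c)
      have hxln : ∀ n : ℕ, ((n : ℕ) : RatFunc (ZMod p)) - xl ≠ 0 :=
        sub_ne p xl (fun c => hnc xl (by simp) c)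
      have hgl : (x0 :: (as' ++ [xl])).getLastD 0 = xl := by
        rw [show x0 :: (as' ++ [xl]) = (x0 :: as') ++ [xl] by simp, List.getLastD_concat]
      have hhd : ((x :: cs') ++ [v]).headD 0 = x := by simp
      have htl : ((x :: cs') ++ [v]).tail = cs' ++ [v] := by simp
      rw [hgl] at hprev
      rw [hhd] at hnext
      rw [hgl, hhd, htl]
      have h5 : y - x ≠ 0 := sub_ne_zero_of_ne hnext
      have h6 : y - xl - 1 ≠ 0 := fun hh => hprev (by linear_combination hh)
      have h7 : xl - (y - 1) ≠ 0 := fun hh => h6 (by linear_combination -hh)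
      have P3 : (xl - (y - 1))⁻¹ = -(y - xl - 1)⁻¹ := by
        rw [show xl - (y - 1) = -(y - xl - 1) by ring, inv_neg]
      rw [ft_eval' p (x0 :: (as' ++ [xl]) ++ [y - 1] ++ ((x :: cs') ++ [v]))
          x0 v (as' ++ xl :: (y - 1) :: x :: cs') (by simp),
        ft_eval' p (x0 :: (as' ++ [xl]) ++ [y] ++ ((x :: cs') ++ [v]))
          x0 v (as' ++ xl :: y :: x :: cs') (by simp),
        ft_eval' p (x0 :: (as' ++ [xl]) ++ ((x :: cs') ++ [v]))
          x0 v (as' ++ xl :: x :: cs') (by simp),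
        ft_eval' p ((x0 :: (as' ++ [xl])).dropLast ++ [y - 1] ++ ((x :: cs') ++ [v]))
          x0 v (as' ++ (y - 1) :: x :: cs') (by rw [show x0 :: (as' ++ [xl]) = (x0 :: as') ++ [xl] by simp, List.dropLast_concat]; simp),
        ft_eval' p (x0 :: (as' ++ [xl]) ++ [y] ++ (cs' ++ [v]))
          x0 v (as' ++ xl :: y :: cs') (by simp)]
      have key : h p p (as' ++ xl :: (y - 1) :: x :: cs') 0
            - h p p (as' ++ xl :: y :: x :: cs') 0
          = (y - x)⁻¹ * (h p p (as' ++ xl :: y :: cs') 0 - h p p (as' ++ xl :: x :: cs') 0)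
            - (xl - (y - 1))⁻¹ *
              (h p p (as' ++ xl :: x :: cs') 0 - h p p (as' ++ (y - 1) :: x :: cs') 0) := by
        rw [h_split p p xl ((y - 1) :: x :: cs') as' 0, h_split p p xl (y :: x :: cs') as' 0,
          ← Finset.sum_sub_distrib]
        have step : ∀ m ∈ Finset.Ioo 0 p,
            h p m as' 0 * (((m : ℕ) : RatFunc (ZMod p)) - xl)⁻¹ * h p p ((y - 1) :: x :: cs') m
              - h p m as' 0 * (((m : ℕ) : RatFunc (ZMod p)) - xl)⁻¹ * h p p (y :: x :: cs') m
            = (y - x)⁻¹ *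
                (h p m as' 0 * (((m : ℕ) : RatFunc (ZMod p)) - xl)⁻¹ * h p p (y :: cs') m
                  - h p m as' 0 * (((m : ℕ) : RatFunc (ZMod p)) - xl)⁻¹ * h p p (x :: cs') m)
              - (xl - (y - 1))⁻¹ *
                (h p m as' 0 * (((m : ℕ) : RatFunc (ZMod p)) - xl)⁻¹ * h p p (x :: cs') m
                  - h p m as' 0 * (((m : ℕ) : RatFunc (ZMod p)) - (y - 1))⁻¹
                      * h p p (x :: cs') m) := by
          intro m hm
          simp only [Finset.mem_Ioo] at hm
          have hk := key2 p y x cs' m h5 hxn hyn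
          have hpf := pf p (((m : ℕ) : RatFunc (ZMod p))) xl (y - 1) h7 (hxln m) (hy1n m)
          linear_combination (h p m as' 0 * (((m : ℕ) : RatFunc (ZMod p)) - xl)⁻¹) * hk
            - (h p m as' 0 * h p p (x :: cs') m) * hpf
        rw [Finset.sum_congr rfl step, Finset.sum_sub_distrib, ← Finset.mul_sum,
          ← Finset.mul_sum, Finset.sum_sub_distrib, Finset.sum_sub_distrib,
          ← h_split p p xl (y :: cs') as' 0, ← h_split p p xl (x :: cs') as' 0,
          ← h_split p p (y - 1) (x :: cs') as' 0]
      rw [show h p p (as' ++ xl :: (y - 1) :: x :: cs') 0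
          = h p p (as' ++ xl :: y :: x :: cs') 0
            + ((y - x)⁻¹ * (h p p (as' ++ xl :: y :: cs') 0 - h p p (as' ++ xl :: x :: cs') 0)
              - (xl - (y - 1))⁻¹ *
                (h p p (as' ++ xl :: x :: cs') 0 - h p p (as' ++ (y - 1) :: x :: cs') 0))
          from by linear_combination key]
      linear_combination (-(0 - x0)⁻¹ * (0 - v)⁻¹ *
          (h p p (as' ++ xl :: x :: cs') 0 - h p p (as' ++ (y - 1) :: x :: cs') 0)
            : RatFunc (ZMod p)) * P3
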